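/- Game call–put option with large penalty: here d = 2, F(x₁,x₂) = (x₁−x₂+K)^+ for a constant K > 0, and Δ > K. The function R(x₁,x₂) = x₁ + K for (x₁,x₂) ∉ [Δ−K,∞)×[Δ,∞) and R(x₁,x₂) = (x₁ − x₂ + K)^+ + Δ for (x₁,x₂) ∈ [Δ−K,∞)×[Δ,∞) belongs to 𝒢 and is its minimal element: R(x) ≤ g(x) for every g ∈ 𝒢 and every x ∈ ℝ²_+. -/

import Mathlib

open Set
open scoped Classical
open Filter
open scoped Topology

noncomputable section

/-- The nonnegative quadrant `ℝ²₊`. -/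
def quadrant : Set (ℝ × ℝ) := {p | 0 ≤ p.1 ∧ 0 ≤ p.2}

/-- Membership in the class `𝒢` (two-dimensional case): `f : ℝ²₊ → ℝ₊` is continuous,
`F ≤ f ≤ F + Δ` on `ℝ²₊`, and `f` is concave on every convex subset `D ⊆ ℝ²₊` on
which `f < F + Δ`. -/
def memG2 (F : ℝ × ℝ → ℝ) (Δ : ℝ) (f : ℝ × ℝ → ℝ) : Prop :=
  ContinuousOn f quadrant ∧
  (∀ x ∈ quadrant, 0 ≤ f x) ∧
  (∀ x ∈ quadrant, F x ≤ f x ∧ f x ≤ F x + Δ) ∧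
  (∀ D : Set (ℝ × ℝ), D ⊆ quadrant → Convex ℝ D →
    (∀ x ∈ D, f x < F x + Δ) → ConcaveOn ℝ D f)

variable {K Δ : ℝ} {g : ℝ × ℝ → ℝ}

lemma concaveOn_Icc_of_Ioo {φ : ℝ → ℝ} {c d : ℝ} (hcd : c < d)
    (hcont : ContinuousOn φ (Icc c d)) (hconc : ConcaveOn ℝ (Ioo c d) φ) :
    ConcaveOn ℝ (Icc c d) φ := by
  refine ⟨convex_Icc _ _, fun x hx y hy a b ha hb hab => ?_⟩
  set m : ℝ := (c + d) / 2 with hm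
  have hmI : m ∈ Ioo c d := ⟨by simp only [hm]; linarith, by simp only [hm]; linarith⟩
  set e : ℕ → ℝ := fun n => (1 : ℝ) / (n + 1) with he
  have he0 : ∀ n, 0 < e n := fun n => by positivity
  have he1 : ∀ n, e n ≤ 1 := by
    intro n
    rw [he]
    rw [div_le_one (by positivity)]
    simp
  set u : ℕ → ℝ := fun n => (1 - e n) * x + e n * m with hu
  set v : ℕ → ℝ := fun n => (1 - e n) * y + e n * m with hv
  have huI : ∀ n, u n ∈ Ioo c d := by
    intro n
    simp only [hu, mem_Ioo]
    constructor
    · have := he0 n; have := he1 n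
      have h1 : c ≤ x := hx.1
      have h2 : c < m := hmI.1
      nlinarith
    · have := he0 n; have := he1 n
      have h1 : x ≤ d := hx.2
      have h2 : m < d := hmI.2
      nlinarith
  have hvI : ∀ n, v n ∈ Ioo c d := by
    intro n
    simp only [hv, mem_Ioo]
    constructor
    · have := he0 n; have := he1 n
      have h1 : c ≤ y := hy.1
      have h2 : c < m := hmI.1
      nlinarith
    · have := he0 n; have := he1 n
      have h1 : y ≤ d := hy.2
      have h2 : m < d := hmI.2
      nlinarith
  have hineq : ∀ n, a * φ (u n) + b * φ (v n) ≤ φ (a * u n + b * v n) := by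
    intro n
    have := hconc.2 (huI n) (hvI n) ha hb hab
    simpa [smul_eq_mul] using this
  have helim : Tendsto e atTop (𝓝 0) := tendsto_one_div_add_atTop_nhds_zero_nat
  have hulim : Tendsto u atTop (𝓝 x) := by
    have : Tendsto (fun n => (1 - e n) * x + e n * m) atTop (𝓝 ((1 - 0) * x + 0 * m)) :=
      ((tendsto_const_nhds.sub helim).mul_const x).add (helim.mul_const m)
    simpa using this
  have hvlim : Tendsto v atTop (𝓝 y) := by
    have : Tendsto (fun n => (1 - e n) * y + e n * m) atTop (𝓝 ((1 - 0) * y + 0 * m)) :=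
      ((tendsto_const_nhds.sub helim).mul_const y).add (helim.mul_const m)
    simpa using this
  have hwlim : Tendsto (fun n => a * u n + b * v n) atTop (𝓝 (a * x + b * y)) :=
    (hulim.const_mul a).add (hvlim.const_mul b)
  have hzmem : a * x + b * y ∈ Icc c d := by
    have := (convex_Icc c d) hx hy ha hb hab
    simpa [smul_eq_mul] using this
  have hφu : Tendsto (fun n => φ (u n)) atTop (𝓝 (φ x)) :=
    ((hcont x hx).tendsto).comp
      (tendsto_nhdsWithin_of_tendsto_nhds_of_eventually_within u hulim
        (Eventually.of_forall fun n => Ioo_subset_Icc_self (huI n)))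
  have hφv : Tendsto (fun n => φ (v n)) atTop (𝓝 (φ y)) :=
    ((hcont y hy).tendsto).comp
      (tendsto_nhdsWithin_of_tendsto_nhds_of_eventually_within v hvlim
        (Eventually.of_forall fun n => Ioo_subset_Icc_self (hvI n)))
  have hφw : Tendsto (fun n => φ (a * u n + b * v n)) atTop (𝓝 (φ (a * x + b * y))) :=
    ((hcont _ hzmem).tendsto).comp
      (tendsto_nhdsWithin_of_tendsto_nhds_of_eventually_within _ hwlim
        (Eventually.of_forall fun n =>
          Ioo_subset_Icc_self (by simpa [smul_eq_mul] using (convex_Ioo (𝕜 := ℝ) c d) (huI n) (hvI n) ha hb hab)))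
  have := le_of_tendsto_of_tendsto' ((hφu.const_mul a).add (hφv.const_mul b)) hφw hineq
  simpa [smul_eq_mul] using this

lemma chord_of_concaveOn {φ : ℝ → ℝ} {c d b : ℝ} (hconc : ConcaveOn ℝ (Icc c d) φ)
    (hcd : c < d) (hb : b ∈ Icc c d) :
    (d - b) * φ c + (b - c) * φ d ≤ (d - c) * φ b := by
  have hdc : (0 : ℝ) < d - c := by linarith
  have hl : (0 : ℝ) ≤ (d - b) / (d - c) := div_nonneg (by linarith [hb.2]) hdc.le
  have hr : (0 : ℝ) ≤ (b - c) / (d - c) := div_nonneg (by linarith [hb.1]) hdc.le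
  have hsum : (d - b) / (d - c) + (b - c) / (d - c) = 1 := by
    field_simp
    ring
  have h2 := hconc.2 (left_mem_Icc.2 hcd.le) (right_mem_Icc.2 hcd.le) hl hr hsum
  simp only [smul_eq_mul] at h2
  have key : (d - b) / (d - c) * c + (b - c) / (d - c) * d = b := by
    field_simp
    ring
  rw [key] at h2
  have h3 : (d - b) / (d - c) * φ c + (b - c) / (d - c) * φ d
      = ((d - b) * φ c + (b - c) * φ d) / (d - c) := by ring
  rw [h3, div_le_iff₀ hdc] at h2
  linarith


variable {K Δ : ℝ} {g : ℝ × ℝ → ℝ}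


lemma vert_concaveOn_Ioo (hg : memG2 (fun p => max (p.1 - p.2 + K) 0) Δ g)
    {p c d : ℝ} (hp : 0 ≤ p) (hc : 0 ≤ c)
    (hP : ∀ s, c < s → s < d → g (p, s) < max (p - s + K) 0 + Δ) :
    ConcaveOn ℝ (Ioo c d) (fun s => g (p, s)) := by
  have hDsub : ({p} ×ˢ Ioo c d : Set (ℝ × ℝ)) ⊆ quadrant := by
    rintro ⟨x1, x2⟩ ⟨h1, h2⟩
    simp only [mem_singleton_iff] at h1
    exact ⟨by simpa [h1] using hp, le_trans hc (le_of_lt h2.1)⟩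
  have hDconv : Convex ℝ ({p} ×ˢ Ioo c d : Set (ℝ × ℝ)) :=
    (convex_singleton p).prod (convex_Ioo c d)
  have hDlt : ∀ x ∈ ({p} ×ˢ Ioo c d : Set (ℝ × ℝ)),
      g x < max (x.1 - x.2 + K) 0 + Δ := by
    rintro ⟨x1, x2⟩ ⟨h1, h2⟩
    simp only [mem_singleton_iff] at h1
    subst h1
    exact hP x2 h2.1 h2.2
  have hD := hg.2.2.2 _ hDsub hDconv hDlt
  refine ⟨convex_Ioo c d, fun x hx y hy a b ha hb hab => ?_⟩
  have hxm : ((p, x) : ℝ × ℝ) ∈ ({p} ×ˢ Ioo c d : Set (ℝ × ℝ)) := ⟨rfl, hx⟩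
  have hym : ((p, y) : ℝ × ℝ) ∈ ({p} ×ˢ Ioo c d : Set (ℝ × ℝ)) := ⟨rfl, hy⟩
  have h := hD.2 hxm hym ha hb hab
  have hcombo : a • ((p, x) : ℝ × ℝ) + b • ((p, y) : ℝ × ℝ) = (p, a • x + b • y) := by
    simp only [Prod.smul_mk, Prod.mk_add_mk, smul_eq_mul]
    exact congrArg₂ Prod.mk (by rw [← add_mul, hab, one_mul]) rfl
  rw [hcombo] at h
  simpa [smul_eq_mul] using h

lemma horiz_concaveOn_Ioo (hg : memG2 (fun p => max (p.1 - p.2 + K) 0) Δ g)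
    {q c d : ℝ} (hq : 0 ≤ q) (hc : 0 ≤ c)
    (hP : ∀ t, c < t → t < d → g (t, q) < max (t - q + K) 0 + Δ) :
    ConcaveOn ℝ (Ioo c d) (fun t => g (t, q)) := by
  have hDsub : (Ioo c d ×ˢ {q} : Set (ℝ × ℝ)) ⊆ quadrant := by
    rintro ⟨x1, x2⟩ ⟨h1, h2⟩
    simp only [mem_singleton_iff] at h2
    exact ⟨le_trans hc (le_of_lt h1.1), by simpa [h2] using hq⟩
  have hDconv : Convex ℝ (Ioo c d ×ˢ {q} : Set (ℝ × ℝ)) :=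
    (convex_Ioo c d).prod (convex_singleton q)
  have hDlt : ∀ x ∈ (Ioo c d ×ˢ {q} : Set (ℝ × ℝ)),
      g x < max (x.1 - x.2 + K) 0 + Δ := by
    rintro ⟨x1, x2⟩ ⟨h1, h2⟩
    simp only [mem_singleton_iff] at h2
    subst h2
    exact hP x1 h1.1 h1.2
  have hD := hg.2.2.2 _ hDsub hDconv hDlt
  refine ⟨convex_Ioo c d, fun x hx y hy a b ha hb hab => ?_⟩
  have hxm : ((x, q) : ℝ × ℝ) ∈ (Ioo c d ×ˢ {q} : Set (ℝ × ℝ)) := ⟨hx, rfl⟩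
  have hym : ((y, q) : ℝ × ℝ) ∈ (Ioo c d ×ˢ {q} : Set (ℝ × ℝ)) := ⟨hy, rfl⟩
  have h := hD.2 hxm hym ha hb hab
  have hcombo : a • ((x, q) : ℝ × ℝ) + b • ((y, q) : ℝ × ℝ) = (a • x + b • y, q) := by
    simp only [Prod.smul_mk, Prod.mk_add_mk, smul_eq_mul]
    exact congrArg₂ Prod.mk rfl (by rw [← add_mul, hab, one_mul])
  rw [hcombo] at h
  simpa [smul_eq_mul] using h

lemma closed_bad_vert (hg : memG2 (fun p => max (p.1 - p.2 + K) 0) Δ g)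
    {p lo : ℝ} (hp : 0 ≤ p) (hlo : 0 ≤ lo) :
    IsClosed {s : ℝ | lo ≤ s ∧ max (p - s + K) 0 + Δ ≤ g (p, s)} := by
  have hcont : ContinuousOn (fun s : ℝ => g (p, s) - (max (p - s + K) 0 + Δ)) (Ici lo) := by
    apply ContinuousOn.sub
    · exact hg.1.comp (Continuous.continuousOn (by fun_prop))
        (fun s hs => ⟨hp, le_trans hlo hs⟩)
    · apply Continuous.continuousOn
      exact (((continuous_const.sub continuous_id).add continuous_const).max
        continuous_const).add continuous_const
  have hset : {s : ℝ | lo ≤ s ∧ max (p - s + K) 0 + Δ ≤ g (p, s)}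
      = Ici lo ∩ (fun s : ℝ => g (p, s) - (max (p - s + K) 0 + Δ)) ⁻¹' Ici 0 := by
    ext s
    simp only [mem_setOf_eq, mem_inter_iff, mem_Ici, mem_preimage, sub_nonneg]
  rw [hset]
  exact hcont.preimage_isClosed_of_isClosed isClosed_Ici isClosed_Ici

lemma closed_bad_horiz (hg : memG2 (fun p => max (p.1 - p.2 + K) 0) Δ g)
    {q lo : ℝ} (hq : 0 ≤ q) (hlo : 0 ≤ lo) :
    IsClosed {t : ℝ | lo ≤ t ∧ max (t - q + K) 0 + Δ ≤ g (t, q)} := by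
  have hcont : ContinuousOn (fun t : ℝ => g (t, q) - (max (t - q + K) 0 + Δ)) (Ici lo) := by
    apply ContinuousOn.sub
    · exact hg.1.comp (Continuous.continuousOn (by fun_prop))
        (fun t ht => ⟨le_trans hlo ht, hq⟩)
    · apply Continuous.continuousOn
      exact (((continuous_id.sub continuous_const).add continuous_const).max
        continuous_const).add continuous_const
  have hset : {t : ℝ | lo ≤ t ∧ max (t - q + K) 0 + Δ ≤ g (t, q)}
      = Ici lo ∩ (fun t : ℝ => g (t, q) - (max (t - q + K) 0 + Δ)) ⁻¹' Ici 0 := by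
    ext t
    simp only [mem_setOf_eq, mem_inter_iff, mem_Ici, mem_preimage, sub_nonneg]
  rw [hset]
  exact hcont.preimage_isClosed_of_isClosed isClosed_Ici isClosed_Ici

lemma maxchord {u v w A B : ℝ} (hA : 0 ≤ A) (hB : 0 ≤ B)
    (h : (A + B) * u = A * v + B * w) :
    (A + B) * max u 0 ≤ A * max v 0 + B * max w 0 := by
  rcases le_total u 0 with h0 | h0
  · rw [max_eq_right h0]
    nlinarith [le_max_right v (0:ℝ), le_max_right w (0:ℝ)]
  · rw [max_eq_left h0]
    nlinarith [le_max_left v (0:ℝ), le_max_left w (0:ℝ)]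


lemma cont_vert (hg : memG2 (fun p => max (p.1 - p.2 + K) 0) Δ g)
    {p c d : ℝ} (hp : 0 ≤ p) (hc : 0 ≤ c) :
    ContinuousOn (fun s => g (p, s)) (Icc c d) :=
  hg.1.comp (Continuous.continuousOn (by fun_prop))
    (fun s hs => ⟨hp, le_trans hc hs.1⟩)

lemma cont_horiz (hg : memG2 (fun p => max (p.1 - p.2 + K) 0) Δ g)
    {q c d : ℝ} (hq : 0 ≤ q) (hc : 0 ≤ c) :
    ContinuousOn (fun t => g (t, q)) (Icc c d) :=
  hg.1.comp (Continuous.continuousOn (by fun_prop))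
    (fun t ht => ⟨le_trans hc ht.1, hq⟩)

/-- Vertical downward closure of the region where `g < F + Δ`. -/
lemma vert_closure (hg : memG2 (fun p => max (p.1 - p.2 + K) 0) Δ g)
    {p b : ℝ} (hp : 0 ≤ p) (hb : 0 ≤ b)
    (hPb : g (p, b) < max (p - b + K) 0 + Δ) :
    ∀ s, 0 ≤ s → s ≤ b → g (p, s) < max (p - s + K) 0 + Δ := by
  by_contra hcon
  push_neg at hcon
  obtain ⟨s₀, hs₀0, hs₀b, hs₀⟩ := hcon
  set A : Set ℝ := {s | s₀ ≤ s ∧ max (p - s + K) 0 + Δ ≤ g (p, s)} ∩ Iic b with hA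
  have hAclosed : IsClosed A := (closed_bad_vert hg hp hs₀0).inter isClosed_Iic
  have hAne : A.Nonempty := ⟨s₀, ⟨le_refl s₀, hs₀⟩, hs₀b⟩
  have hAbdd : BddAbove A := ⟨b, fun s hs => hs.2⟩
  set c := sSup A with hcdef
  have hcA : c ∈ A := hAclosed.csSup_mem hAne hAbdd
  have hc0 : 0 ≤ c := le_trans hs₀0 hcA.1.1
  have hcb : c ≤ b := hcA.2
  have hcP : max (p - c + K) 0 + Δ ≤ g (p, c) := hcA.1.2
  have hclt : c < b := by
    rcases lt_or_eq_of_le hcb with h | h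
    · exact h
    · exact absurd hPb (not_lt.2 (by rw [h] at hcP; exact hcP))
  have hPmid : ∀ s, c < s → s ≤ b → g (p, s) < max (p - s + K) 0 + Δ := by
    intro s h1 h2
    by_contra hcon2
    push_neg at hcon2
    have hsA : s ∈ A := ⟨⟨le_trans hcA.1.1 h1.le, hcon2⟩, h2⟩
    exact absurd (le_csSup hAbdd hsA) (not_le.2 h1)
  have hgc : g (p, c) = max (p - c + K) 0 + Δ :=
    le_antisymm ((hg.2.2.1 (p, c) ⟨hp, hc0⟩).2) hcP
  by_cases hS : ({s | b ≤ s ∧ max (p - s + K) 0 + Δ ≤ g (p, s)}).Nonempty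
  · set d := sInf {s | b ≤ s ∧ max (p - s + K) 0 + Δ ≤ g (p, s)} with hd
    have hdmem := (closed_bad_vert hg hp hb).csInf_mem hS ⟨b, fun s hs => hs.1⟩
    have hbd : b ≤ d := hdmem.1
    have hdP : max (p - d + K) 0 + Δ ≤ g (p, d) := hdmem.2
    have hbdlt : b < d := by
      rcases lt_or_eq_of_le hbd with h | h
      · exact h
      · exact absurd hPb (not_lt.2 (by rw [← h] at hdP; exact hdP))
    have hPmid2 : ∀ s, b ≤ s → s < d → g (p, s) < max (p - s + K) 0 + Δ := by
      intro s h1 h2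
      by_contra hcon2
      push_neg at hcon2
      have hsmem : s ∈ {s | b ≤ s ∧ max (p - s + K) 0 + Δ ≤ g (p, s)} := ⟨h1, hcon2⟩
      exact absurd (csInf_le ⟨b, fun x hx => hx.1⟩ hsmem) (not_le.2 h2)
    have hcd : c < d := lt_trans hclt hbdlt
    have hconc := concaveOn_Icc_of_Ioo hcd (cont_vert hg hp hc0)
      (vert_concaveOn_Ioo hg hp hc0 (fun s h1 h2 => by
        rcases le_total s b with h | h
        · exact hPmid s h1 h
        · exact hPmid2 s h h2))
    have hchord : (d - b) * g (p, c) + (b - c) * g (p, d) ≤ (d - c) * g (p, b) :=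
      chord_of_concaveOn hconc hcd ⟨hclt.le, hbd⟩
    have hgd : g (p, d) = max (p - d + K) 0 + Δ :=
      le_antisymm ((hg.2.2.1 (p, d) ⟨hp, le_trans hb hbd⟩).2) hdP
    have hF := maxchord (u := p - b + K) (v := p - c + K) (w := p - d + K)
      (A := d - b) (B := b - c) (by linarith) (by linarith) (by ring)
    rw [hgc, hgd] at hchord
    nlinarith [hchord, hF, mul_pos (sub_pos.mpr hcd) (sub_pos.mpr hPb)]
  · have hall : ∀ s, b ≤ s → g (p, s) < max (p - s + K) 0 + Δ := by
      intro s h1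
      by_contra h2
      push_neg at h2
      exact hS ⟨s, h1, h2⟩
    have hgb0 : 0 ≤ g (p, b) := hg.2.1 (p, b) ⟨hp, hb⟩
    have hFcb : max (p - b + K) 0 ≤ max (p - c + K) 0 := max_le_max (by linarith) le_rfl
    set δ := max (p - c + K) 0 + Δ - g (p, b) with hδ
    have hδpos : 0 < δ := by
      have : g (p, b) < max (p - c + K) 0 + Δ := lt_of_lt_of_le hPb (by linarith)
      rw [hδ]; linarith
    set T := b + (b - c) * g (p, b) / δ + 1 with hT
    have hbT : b < T := by
      have h1 : 0 ≤ (b - c) * g (p, b) / δ :=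
        div_nonneg (mul_nonneg (by linarith) hgb0) hδpos.le
      rw [hT]; linarith
    have hcT : c < T := lt_trans hclt hbT
    have hconc := concaveOn_Icc_of_Ioo hcT (cont_vert hg hp hc0)
      (vert_concaveOn_Ioo hg hp hc0 (fun s h1 h2 => by
        rcases le_total s b with h | h
        · exact hPmid s h1 h
        · exact hall s h))
    have hchord : (T - b) * g (p, c) + (b - c) * g (p, T) ≤ (T - c) * g (p, b) :=
      chord_of_concaveOn hconc hcT ⟨hclt.le, hbT.le⟩
    have hgT : 0 ≤ g (p, T) := hg.2.1 (p, T) ⟨hp, le_trans hb hbT.le⟩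
    have hkey : (T - b) * δ = (b - c) * g (p, b) + δ := by
      rw [hT]
      field_simp
      ring
    have hδeq : max (p - c + K) 0 + Δ = g (p, b) + δ := by rw [hδ]; ring
    rw [hgc, hδeq] at hchord
    nlinarith [hchord, hkey, mul_nonneg (show (0:ℝ) ≤ b - c by linarith) hgT, hδpos]

/-- Lower bound via the vertical line: either `g ≥ p + K` there, or there is a
point `d` above where `g` touches `F + Δ`, with a chord bound. -/
lemma vert_low (hg : memG2 (fun p => max (p.1 - p.2 + K) 0) Δ g)
    (hK : 0 < K) {p b : ℝ} (hp : 0 ≤ p) (hb : 0 ≤ b)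
    (hPb : g (p, b) < max (p - b + K) 0 + Δ) :
    p + K ≤ g (p, b) ∨
      ∃ d, b < d ∧ min (p + K) (max (p - d + K) 0 + Δ) ≤ g (p, b) := by
  have hVC := vert_closure hg hp hb hPb
  have hg0 : p + K ≤ g (p, 0) := by
    have h1 := (hg.2.2.1 (p, 0) ⟨hp, le_rfl⟩).1
    have h2 : p - 0 + K ≤ max (p - 0 + K) 0 := le_max_left _ _
    linarith
  by_cases hS : ({s | b ≤ s ∧ max (p - s + K) 0 + Δ ≤ g (p, s)}).Nonempty
  · set d := sInf {s | b ≤ s ∧ max (p - s + K) 0 + Δ ≤ g (p, s)} with hd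
    have hdmem := (closed_bad_vert hg hp hb).csInf_mem hS ⟨b, fun s hs => hs.1⟩
    have hbd : b ≤ d := hdmem.1
    have hdP : max (p - d + K) 0 + Δ ≤ g (p, d) := hdmem.2
    have hbdlt : b < d := by
      rcases lt_or_eq_of_le hbd with h | h
      · exact h
      · exact absurd hPb (not_lt.2 (by rw [← h] at hdP; exact hdP))
    have hPmid2 : ∀ s, b ≤ s → s < d → g (p, s) < max (p - s + K) 0 + Δ := by
      intro s h1 h2
      by_contra hcon2
      push_neg at hcon2
      have hsmem : s ∈ {s | b ≤ s ∧ max (p - s + K) 0 + Δ ≤ g (p, s)} := ⟨h1, hcon2⟩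
      exact absurd (csInf_le ⟨b, fun x hx => hx.1⟩ hsmem) (not_le.2 h2)
    have h0d : (0:ℝ) < d := lt_of_le_of_lt hb hbdlt
    have hconc := concaveOn_Icc_of_Ioo h0d (cont_vert hg hp le_rfl)
      (vert_concaveOn_Ioo hg hp le_rfl (fun s h1 h2 => by
        rcases le_total s b with h | h
        · exact hVC s h1.le h
        · exact hPmid2 s h h2))
    have hchord : (d - b) * g (p, 0) + (b - 0) * g (p, d) ≤ (d - 0) * g (p, b) :=
      chord_of_concaveOn hconc h0d ⟨hb, hbd⟩
    have hgd : g (p, d) = max (p - d + K) 0 + Δ :=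
      le_antisymm ((hg.2.2.1 (p, d) ⟨hp, le_trans hb hbd⟩).2) hdP
    refine Or.inr ⟨d, hbdlt, ?_⟩
    have e1 : (d - b) * min (p + K) (max (p - d + K) 0 + Δ) ≤ (d - b) * g (p, 0) :=
      mul_le_mul_of_nonneg_left (le_trans (min_le_left _ _) hg0) (by linarith)
    have e2 : b * min (p + K) (max (p - d + K) 0 + Δ) ≤ b * g (p, d) :=
      mul_le_mul_of_nonneg_left (by rw [hgd]; exact min_le_right _ _) hb
    nlinarith [hchord, e1, e2, h0d]
  · left
    by_contra hlt
    push_neg at hlt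
    have hall : ∀ s, b ≤ s → g (p, s) < max (p - s + K) 0 + Δ := by
      intro s h1
      by_contra h2
      push_neg at h2
      exact hS ⟨s, h1, h2⟩
    set δ := p + K - g (p, b) with hδ
    have hδpos : 0 < δ := by rw [hδ]; linarith
    have hgb0 : 0 ≤ g (p, b) := hg.2.1 (p, b) ⟨hp, hb⟩
    set T := b + b * (p + K) / δ + 1 with hT
    have hbT : b < T := by
      have h1 : 0 ≤ b * (p + K) / δ :=
        div_nonneg (mul_nonneg hb (by linarith)) hδpos.le
      rw [hT]; linarith
    have h0T : (0:ℝ) < T := lt_of_le_of_lt hb hbT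
    have hconc := concaveOn_Icc_of_Ioo h0T (cont_vert hg hp le_rfl)
      (vert_concaveOn_Ioo hg hp le_rfl (fun s h1 h2 => by
        rcases le_total s b with h | h
        · exact hVC s h1.le h
        · exact hall s h))
    have hchord : (T - b) * g (p, 0) + (b - 0) * g (p, T) ≤ (T - 0) * g (p, b) :=
      chord_of_concaveOn hconc h0T ⟨hb, hbT.le⟩
    have hgT : 0 ≤ g (p, T) := hg.2.1 (p, T) ⟨hp, le_trans hb hbT.le⟩
    have hkey : T * δ = b * (p + K) + (b + 1) * δ := by
      rw [hT]
      field_simp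
      ring
    have hgb : g (p, b) = p + K - δ := by rw [hδ]; ring
    rw [hgb] at hchord
    nlinarith [hchord, hkey, mul_le_mul_of_nonneg_left hg0
      (show (0:ℝ) ≤ T - b by linarith), mul_nonneg hb hgT, hδpos]

/-- Horizontal downward closure of the region where `g < F + Δ`. -/
lemma horiz_closure (hg : memG2 (fun p => max (p.1 - p.2 + K) 0) Δ g)
    {a b : ℝ} (ha : 0 ≤ a) (hb : 0 ≤ b)
    (hPa : g (a, b) < max (a - b + K) 0 + Δ) :
    ∀ t, 0 ≤ t → t ≤ a → g (t, b) < max (t - b + K) 0 + Δ := by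
  by_contra hcon
  push_neg at hcon
  obtain ⟨t₀, ht₀0, ht₀a, ht₀⟩ := hcon
  set A : Set ℝ := {t | t₀ ≤ t ∧ max (t - b + K) 0 + Δ ≤ g (t, b)} ∩ Iic a with hA
  have hAclosed : IsClosed A := (closed_bad_horiz hg hb ht₀0).inter isClosed_Iic
  have hAne : A.Nonempty := ⟨t₀, ⟨le_refl t₀, ht₀⟩, ht₀a⟩
  have hAbdd : BddAbove A := ⟨a, fun s hs => hs.2⟩
  set c := sSup A with hcdef
  have hcA : c ∈ A := hAclosed.csSup_mem hAne hAbdd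
  have hc0 : 0 ≤ c := le_trans ht₀0 hcA.1.1
  have hca : c ≤ a := hcA.2
  have hcP : max (c - b + K) 0 + Δ ≤ g (c, b) := hcA.1.2
  have hclt : c < a := by
    rcases lt_or_eq_of_le hca with h | h
    · exact h
    · exact absurd hPa (not_lt.2 (by rw [h] at hcP; exact hcP))
  have hPmid : ∀ t, c < t → t ≤ a → g (t, b) < max (t - b + K) 0 + Δ := by
    intro t h1 h2
    by_contra hcon2
    push_neg at hcon2
    have htA : t ∈ A := ⟨⟨le_trans hcA.1.1 h1.le, hcon2⟩, h2⟩
    exact absurd (le_csSup hAbdd htA) (not_le.2 h1)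
  have hgc : g (c, b) = max (c - b + K) 0 + Δ :=
    le_antisymm ((hg.2.2.1 (c, b) ⟨hc0, hb⟩).2) hcP
  by_cases hS : ({t | a ≤ t ∧ max (t - b + K) 0 + Δ ≤ g (t, b)}).Nonempty
  · set d := sInf {t | a ≤ t ∧ max (t - b + K) 0 + Δ ≤ g (t, b)} with hd
    have hdmem := (closed_bad_horiz hg hb ha).csInf_mem hS ⟨a, fun s hs => hs.1⟩
    have had : a ≤ d := hdmem.1
    have hdP : max (d - b + K) 0 + Δ ≤ g (d, b) := hdmem.2
    have hadlt : a < d := by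
      rcases lt_or_eq_of_le had with h | h
      · exact h
      · exact absurd hPa (not_lt.2 (by rw [← h] at hdP; exact hdP))
    have hPmid2 : ∀ t, a ≤ t → t < d → g (t, b) < max (t - b + K) 0 + Δ := by
      intro t h1 h2
      by_contra hcon2
      push_neg at hcon2
      have htmem : t ∈ {t | a ≤ t ∧ max (t - b + K) 0 + Δ ≤ g (t, b)} := ⟨h1, hcon2⟩
      exact absurd (csInf_le ⟨a, fun x hx => hx.1⟩ htmem) (not_le.2 h2)
    have hcd : c < d := lt_trans hclt hadlt
    have hconc := concaveOn_Icc_of_Ioo hcd (cont_horiz hg hb hc0)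
      (horiz_concaveOn_Ioo hg hb hc0 (fun t h1 h2 => by
        rcases le_total t a with h | h
        · exact hPmid t h1 h
        · exact hPmid2 t h h2))
    have hchord : (d - a) * g (c, b) + (a - c) * g (d, b) ≤ (d - c) * g (a, b) :=
      chord_of_concaveOn hconc hcd ⟨hclt.le, had⟩
    have hgd : g (d, b) = max (d - b + K) 0 + Δ :=
      le_antisymm ((hg.2.2.1 (d, b) ⟨le_trans ha had, hb⟩).2) hdP
    have hF := maxchord (u := a - b + K) (v := c - b + K) (w := d - b + K)
      (A := d - a) (B := a - c) (by linarith) (by linarith) (by ring)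
    rw [hgc, hgd] at hchord
    nlinarith [hchord, hF, mul_pos (sub_pos.mpr hcd) (sub_pos.mpr hPa)]
  · have hall : ∀ t, a ≤ t → g (t, b) < max (t - b + K) 0 + Δ := by
      intro t h1
      by_contra h2
      push_neg at h2
      exact hS ⟨t, h1, h2⟩
    set δ := max (a - b + K) 0 + Δ - g (a, b) with hδ
    have hδpos : 0 < δ := by rw [hδ]; linarith
    set T := a + (a - c) * Δ / δ + 1 with hT
    have hΔ0 : 0 ≤ Δ := by
      have h1 := hg.2.2.1 (a, b) ⟨ha, hb⟩
      nlinarith [h1.1, h1.2]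
    have haT : a < T := by
      have h1 : 0 ≤ (a - c) * Δ / δ :=
        div_nonneg (mul_nonneg (by linarith) hΔ0) hδpos.le
      rw [hT]; linarith
    have hcT : c < T := lt_trans hclt haT
    have hconc := concaveOn_Icc_of_Ioo hcT (cont_horiz hg hb hc0)
      (horiz_concaveOn_Ioo hg hb hc0 (fun t h1 h2 => by
        rcases le_total t a with h | h
        · exact hPmid t h1 h
        · exact hall t h))
    have hchord : (T - a) * g (c, b) + (a - c) * g (T, b) ≤ (T - c) * g (a, b) :=
      chord_of_concaveOn hconc hcT ⟨hclt.le, haT.le⟩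
    have hgT : max (T - b + K) 0 ≤ g (T, b) :=
      (hg.2.2.1 (T, b) ⟨le_trans ha haT.le, hb⟩).1
    have hF := maxchord (u := a - b + K) (v := c - b + K) (w := T - b + K)
      (A := T - a) (B := a - c) (by linarith) (by linarith) (by ring)
    have hkey : (T - c) * δ = (a - c) * δ + (a - c) * Δ + δ := by
      rw [hT]
      field_simp
      ring
    have hga : g (a, b) = max (a - b + K) 0 + Δ - δ := by rw [hδ]; ring
    rw [hgc, hga] at hchord
    nlinarith [hchord, hF, hkey, hδpos,
      mul_le_mul_of_nonneg_left hgT (show (0:ℝ) ≤ a - c by linarith),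
      mul_nonneg (show (0:ℝ) ≤ a - c by linarith) hδpos.le]

/-- No point of the region `g < F + Δ` lies in `S = [Δ-K,∞) × [Δ,∞)`. -/
lemma not_in_S (hg : memG2 (fun p => max (p.1 - p.2 + K) 0) Δ g)
    (hK : 0 < K) (hΔK : K < Δ) {a b : ℝ} (haΔ : Δ - K ≤ a) (hbΔ : Δ ≤ b) :
    ¬ (g (a, b) < max (a - b + K) 0 + Δ) := by
  intro hP
  have ha : 0 ≤ a := le_trans (by linarith) haΔ
  have hb : 0 ≤ b := le_trans (by linarith) hbΔ
  have hPq := horiz_closure hg ha hb hP (Δ - K) (by linarith) haΔ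
  have hmax0 : max (Δ - K - b + K) 0 = 0 := max_eq_right (by linarith)
  have hΔle : Δ ≤ g (Δ - K, b) := by
    rcases vert_low hg hK (show (0:ℝ) ≤ Δ - K by linarith) hb hPq with h | ⟨d, hd, hmin⟩
    · linarith
    · have h1 : Δ ≤ min (Δ - K + K) (max (Δ - K - d + K) 0 + Δ) :=
        le_min (by linarith) (by linarith [le_max_right (Δ - K - d + K) (0:ℝ)])
      linarith
  rw [hmax0] at hPq
  linarith

/-- The main lower bound: on the region `g < F + Δ` we have `g ≥ x₁ + K`. -/
lemma main_bound (hg : memG2 (fun p => max (p.1 - p.2 + K) 0) Δ g)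
    (hK : 0 < K) (hΔK : K < Δ) {a b : ℝ} (ha : 0 ≤ a) (hb : 0 ≤ b)
    (hP : g (a, b) < max (a - b + K) 0 + Δ) : a + K ≤ g (a, b) := by
  have hHC := horiz_closure hg ha hb hP
  have hP0 : g (0, b) < max (0 - b + K) 0 + Δ := hHC 0 le_rfl ha
  have hg0b : K ≤ g (0, b) := by
    rcases vert_low hg hK le_rfl hb hP0 with h | ⟨d, hd, hmin⟩
    · linarith
    · have h1 : K ≤ min ((0:ℝ) + K) (max (0 - d + K) 0 + Δ) :=
        le_min (by linarith) (by linarith [le_max_right (0 - d + K) (0:ℝ)])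
      linarith
  by_cases hS : ({t | a ≤ t ∧ max (t - b + K) 0 + Δ ≤ g (t, b)}).Nonempty
  · set d := sInf {t | a ≤ t ∧ max (t - b + K) 0 + Δ ≤ g (t, b)} with hd
    have hdmem := (closed_bad_horiz hg hb ha).csInf_mem hS ⟨a, fun s hs => hs.1⟩
    have had : a ≤ d := hdmem.1
    have hdP : max (d - b + K) 0 + Δ ≤ g (d, b) := hdmem.2
    have hadlt : a < d := by
      rcases lt_or_eq_of_le had with h | h
      · exact h
      · exact absurd hP (not_lt.2 (by rw [← h] at hdP; exact hdP))
    have hPmid2 : ∀ t, a ≤ t → t < d → g (t, b) < max (t - b + K) 0 + Δ := by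
      intro t h1 h2
      by_contra hcon2
      push_neg at hcon2
      have htmem : t ∈ {t | a ≤ t ∧ max (t - b + K) 0 + Δ ≤ g (t, b)} := ⟨h1, hcon2⟩
      exact absurd (csInf_le ⟨a, fun x hx => hx.1⟩ htmem) (not_le.2 h2)
    have h0d : (0:ℝ) < d := lt_of_le_of_lt ha hadlt
    have hconc := concaveOn_Icc_of_Ioo h0d (cont_horiz hg hb le_rfl)
      (horiz_concaveOn_Ioo hg hb le_rfl (fun t h1 h2 => by
        rcases le_total t a with h | h
        · exact hHC t h1.le h
        · exact hPmid2 t h h2))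
    have hchord : (d - a) * g (0, b) + (a - 0) * g (d, b) ≤ (d - 0) * g (a, b) :=
      chord_of_concaveOn hconc h0d ⟨ha, had⟩
    have hgd : g (d, b) = max (d - b + K) 0 + Δ :=
      le_antisymm ((hg.2.2.1 (d, b) ⟨le_trans ha had, hb⟩).2) hdP
    by_cases hcase : d + K ≤ max (d - b + K) 0 + Δ
    · have e1 : (d - a) * K ≤ (d - a) * g (0, b) :=
        mul_le_mul_of_nonneg_left hg0b (by linarith)
      have e2 : a * (d + K) ≤ a * g (d, b) :=
        mul_le_mul_of_nonneg_left (by rw [hgd]; exact hcase) ha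
      nlinarith [hchord, e1, e2, h0d]
    · push_neg at hcase
      have hbgt : Δ < b := by linarith [le_max_left (d - b + K) (0:ℝ)]
      have hdgt : Δ - K < d := by linarith [le_max_right (d - b + K) (0:ℝ)]
      have hmlt : max a (Δ - K) < d := max_lt hadlt (by linarith)
      set t := (max a (Δ - K) + d) / 2 with ht
      have h1 : a ≤ t := by
        have h2 := le_max_left a (Δ - K)
        rw [ht]; linarith
      have h2 : Δ - K ≤ t := by
        have h3 := le_max_right a (Δ - K)
        rw [ht]; linarith
      have h3 : t < d := by rw [ht]; linarith
      have hPt : g (t, b) < max (t - b + K) 0 + Δ := hPmid2 t h1 h3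
      exact absurd hPt (not_in_S hg hK hΔK h2 hbgt.le)
  · have hall : ∀ t, a ≤ t → g (t, b) < max (t - b + K) 0 + Δ := by
      intro t h1
      by_contra h2
      push_neg at h2
      exact hS ⟨t, h1, h2⟩
    by_contra hcon
    push_neg at hcon
    set δ := a + K - g (a, b) with hδ
    have hδpos : 0 < δ := by rw [hδ]; linarith
    have hgab0 : 0 ≤ g (a, b) := hg.2.1 (a, b) ⟨ha, hb⟩
    set T := max (b + 1) (a + a * b / δ + 1) with hT
    have habδ : 0 ≤ a * b / δ := div_nonneg (mul_nonneg ha hb) hδpos.le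
    have haT : a < T := lt_of_lt_of_le (by linarith) (le_max_right _ _)
    have hbT : b < T := lt_of_lt_of_le (by linarith) (le_max_left _ _)
    have h0T : (0:ℝ) < T := lt_of_le_of_lt ha haT
    have hconc := concaveOn_Icc_of_Ioo h0T (cont_horiz hg hb le_rfl)
      (horiz_concaveOn_Ioo hg hb le_rfl (fun t h1 h2 => by
        rcases le_total t a with h | h
        · exact hHC t h1.le h
        · exact hall t h))
    have hchord : (T - a) * g (0, b) + (a - 0) * g (T, b) ≤ (T - 0) * g (a, b) :=
      chord_of_concaveOn hconc h0T ⟨ha, haT.le⟩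
    have hgTb : T - b + K ≤ g (T, b) := by
      have h1 := (hg.2.2.1 (T, b) ⟨h0T.le, hb⟩).1
      linarith [le_max_left (T - b + K) (0:ℝ)]
    have hkey : δ * (a + a * b / δ + 1) = δ * a + a * b + δ := by
      field_simp
    have hTδ : δ * a + a * b + δ ≤ δ * T := by
      rw [← hkey]
      exact mul_le_mul_of_nonneg_left (le_max_right _ _) hδpos.le
    have hgab : g (a, b) = a + K - δ := by rw [hδ]; ring
    rw [hgab] at hchord
    have e1 : (T - a) * K ≤ (T - a) * g (0, b) :=
      mul_le_mul_of_nonneg_left hg0b (by linarith)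
    have e2 : a * (T - b + K) ≤ a * g (T, b) :=
      mul_le_mul_of_nonneg_left hgTb ha
    nlinarith [hchord, e1, e2, hTδ, hδpos]
/-- Game call–put option with large penalty (`Δ > K`): with
`F(x₁, x₂) = (x₁ - x₂ + K)⁺`, the function `R(x₁, x₂) = x₁ + K` for
`(x₁, x₂) ∉ [Δ - K, ∞) × [Δ, ∞)`, `R(x₁, x₂) = (x₁ - x₂ + K)⁺ + Δ` for
`(x₁, x₂) ∈ [Δ - K, ∞) × [Δ, ∞)` belongs to `𝒢` and is its minimal element. -/
theorem call_put_large_penalty (K Δ : ℝ) (hK : 0 < K) (hΔK : K < Δ) :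
    memG2 (fun p => max (p.1 - p.2 + K) 0) Δ
      (fun p => if Δ - K ≤ p.1 ∧ Δ ≤ p.2 then max (p.1 - p.2 + K) 0 + Δ
        else p.1 + K) ∧
    ∀ g : ℝ × ℝ → ℝ, memG2 (fun p => max (p.1 - p.2 + K) 0) Δ g →
      ∀ p ∈ quadrant,
        (if Δ - K ≤ p.1 ∧ Δ ≤ p.2 then max (p.1 - p.2 + K) 0 + Δ
          else p.1 + K) ≤ g p := by
  have hΔ : 0 < Δ := hK.trans hΔK
  have Rmin : ∀ q : ℝ × ℝ,
      (if Δ - K ≤ q.1 ∧ Δ ≤ q.2 then max (q.1 - q.2 + K) 0 + Δ else q.1 + K)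
        = min (q.1 + K) (max (q.1 - q.2 + K) 0 + Δ) := by
    intro q
    by_cases hq : Δ - K ≤ q.1 ∧ Δ ≤ q.2
    · rw [if_pos hq, min_eq_right]
      have h1 : max (q.1 - q.2 + K) 0 ≤ q.1 + K - Δ :=
        max_le (by linarith [hq.2]) (by linarith [hq.1])
      linarith
    · rw [if_neg hq, min_eq_left]
      push_neg at hq
      rcases le_or_gt (Δ - K) q.1 with h | h
      · have h2 := hq h
        linarith [le_max_left (q.1 - q.2 + K) (0:ℝ)]
      · linarith [le_max_right (q.1 - q.2 + K) (0:ℝ)]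
  constructor
  · refine ⟨?_, ?_, ?_, ?_⟩
    · have hfun : (fun p : ℝ × ℝ =>
          if Δ - K ≤ p.1 ∧ Δ ≤ p.2 then max (p.1 - p.2 + K) 0 + Δ else p.1 + K)
          = fun p : ℝ × ℝ => min (p.1 + K) (max (p.1 - p.2 + K) 0 + Δ) :=
        funext Rmin
      rw [hfun]
      apply Continuous.continuousOn
      exact (continuous_fst.add continuous_const).min
        ((((continuous_fst.sub continuous_snd).add continuous_const).max
          continuous_const).add continuous_const)
    · intro x hx
      dsimp only
      split_ifs with hcond
      · linarith [le_max_right (x.1 - x.2 + K) (0:ℝ)]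
      · have := hx.1
        linarith
    · intro x hx
      dsimp only
      constructor
      · split_ifs with hcond
        · linarith
        · exact max_le (by linarith [hx.2]) (by linarith [hx.1])
      · split_ifs with hcond
        · exact le_rfl
        · push_neg at hcond
          rcases le_or_gt (Δ - K) x.1 with h | h
          · have h2 := hcond h
            linarith [le_max_left (x.1 - x.2 + K) (0:ℝ)]
          · linarith [le_max_right (x.1 - x.2 + K) (0:ℝ)]
    · intro D hDq hDconv hlt
      refine ⟨hDconv, fun x hx y hy α β hα hβ hsum => ?_⟩
      have hval : ∀ z ∈ D,
          (if Δ - K ≤ (z : ℝ × ℝ).1 ∧ Δ ≤ z.2 then max (z.1 - z.2 + K) 0 + Δ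
            else z.1 + K) = z.1 + K := by
        intro z hz
        have h1 := hlt z hz
        dsimp only at h1
        rw [Rmin z] at h1
        rw [Rmin z]
        apply min_eq_left
        rcases min_lt_iff.1 h1 with h | h
        · exact h.le
        · exact absurd h (lt_irrefl _)
      dsimp only
      rw [hval x hx, hval y hy, hval _ (hDconv hx hy hα hβ hsum)]
      have hfst : (α • x + β • y).1 = α * x.1 + β * y.1 := by
        simp [smul_eq_mul]
      rw [hfst]
      simp only [smul_eq_mul]
      have hK1 : α * K + β * K = K := by rw [← add_mul, hsum, one_mul]
      nlinarith [hK1]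
  · intro g hg p hp
    obtain ⟨a, b⟩ := p
    obtain ⟨ha, hb⟩ := hp
    dsimp only at ha hb ⊢
    rcases lt_or_ge (g (a, b)) (max (a - b + K) 0 + Δ) with hlt | hge
    · split_ifs with hcond
      · exact absurd hlt (not_in_S hg hK hΔK hcond.1 hcond.2)
      · exact main_bound hg hK hΔK ha hb hlt
    · split_ifs with hcond
      · exact hge
      · push_neg at hcond
        rcases le_or_gt (Δ - K) a with h | h
        · have h2 := hcond h
          linarith [le_max_left (a - b + K) (0:ℝ)]
        · linarith [le_max_right (a - b + K) (0:ℝ)]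

end
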